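/- Let X be a compact metric space, A₁, A₂ closed subalgebras of C(X) containing constants, and μ a regular Borel signed measure annihilating A₁ + A₂ with μ ≠ 0 and Jordan decomposition μ = μ⁺ − μ⁻. Then for every x₀ ∈ supp(μ⁺) there exists x₁ ∈ supp(μ⁻) with s(x₁) = s(x₀), where s is the quotient map induced by A₁. -/

import Mathlib

open scoped BigOperators

universe u

variable {X : Type u}

def sepSetoid [TopologicalSpace X] (A : Subalgebra ℝ C(X, ℝ)) : Setoid X :=
  ⟨fun a b => ∀ f ∈ A, f a = f b,
   ⟨fun _ _ _ => rfl, fun h f hf => (h f hf).symm, fun h1 h2 f hf => (h1 f hf).trans (h2 f hf)⟩⟩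

def algRel [TopologicalSpace X] (A : Subalgebra ℝ C(X, ℝ)) (a b : X) : Prop :=
  ∀ f ∈ A, f a = f b

def IsBoltFrom (R S : X → X → Prop) {n : ℕ} (x : Fin n → X) : Prop :=
  ∀ i : ℕ, ∀ h : i + 1 < n,
    x ⟨i, by omega⟩ ≠ x ⟨i + 1, h⟩ ∧
    (if i % 2 = 0 then R else S) (x ⟨i, by omega⟩) (x ⟨i + 1, h⟩)

def IsBolt (R S : X → X → Prop) {n : ℕ} (x : Fin n → X) : Prop :=
  IsBoltFrom R S x ∨ IsBoltFrom S R x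

def IsClosedBolt (R S : X → X → Prop) {n : ℕ} (x : Fin n → X) : Prop :=
  ∃ hn : 0 < n, IsBolt R S (Fin.snoc x (x ⟨0, hn⟩))

def IsInfBoltFrom (R S : X → X → Prop) (x : ℕ → X) : Prop :=
  ∀ i : ℕ, x i ≠ x (i + 1) ∧ (if i % 2 = 0 then R else S) (x i) (x (i + 1))

def IsInfBolt (R S : X → X → Prop) (x : ℕ → X) : Prop :=
  IsInfBoltFrom R S x ∨ IsInfBoltFrom S R x

def sumSet [TopologicalSpace X] (A₁ A₂ : Subalgebra ℝ C(X, ℝ)) : Set C(X, ℝ) :=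
  {u | ∃ v₁ ∈ A₁, ∃ v₂ ∈ A₂, u = v₁ + v₂}

def ExtremalFin [TopologicalSpace X] [CompactSpace X] (w : C(X, ℝ)) {n : ℕ} (x : Fin n → X) : Prop :=
  (∀ i, w (x i) = (-1 : ℝ) ^ (i : ℕ) * ‖w‖) ∨ (∀ i, w (x i) = (-1 : ℝ) ^ ((i : ℕ) + 1) * ‖w‖)

def ExtremalSeq [TopologicalSpace X] [CompactSpace X] (w : C(X, ℝ)) (x : ℕ → X) : Prop :=
  (∀ i, w (x i) = (-1 : ℝ) ^ i * ‖w‖) ∨ (∀ i, w (x i) = (-1 : ℝ) ^ (i + 1) * ‖w‖)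

noncomputable def ssint {α : Type*} [MeasurableSpace α] (μ : MeasureTheory.SignedMeasure α) (g : α → ℝ) : ℝ :=
  (∫ a, g a ∂μ.toJordanDecomposition.posPart) - ∫ a, g a ∂μ.toJordanDecomposition.negPart

def measSupport {α : Type*} [TopologicalSpace α] [MeasurableSpace α] (m : MeasureTheory.Measure α) : Set α :=
  {x | ∀ U : Set α, IsOpen U → x ∈ U → 0 < m U}

open MeasureTheory

lemma null_compl_measSupport {α : Type*} [TopologicalSpace α] [SecondCountableTopology α]
    [MeasurableSpace α] (m : Measure α) : m (measSupport m)ᶜ = 0 := by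
  have h : ∀ x : ↥(measSupport m)ᶜ, ∃ U : Set α, IsOpen U ∧ (x : α) ∈ U ∧ m U = 0 := by
    rintro ⟨x, hx⟩
    simp only [measSupport, Set.mem_compl_iff, Set.mem_setOf_eq, not_forall] at hx
    obtain ⟨U, hU, hxU, hm⟩ := hx
    exact ⟨U, hU, hxU, le_antisymm (not_lt.mp hm) zero_le⟩
  choose U hUo hxU hU0 using h
  obtain ⟨T, hTc, hT⟩ := TopologicalSpace.isOpen_iUnion_countable U hUo
  have hsub : (measSupport m)ᶜ ⊆ ⋃ i ∈ T, U i := by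
    rw [hT]; intro x hx; exact Set.mem_iUnion.mpr ⟨⟨x, hx⟩, hxU _⟩
  exact measure_mono_null hsub ((measure_biUnion_null_iff hTc).mpr fun i _ => hU0 i)

lemma isClosed_measSupport {α : Type*} [TopologicalSpace α] [MeasurableSpace α] (m : Measure α) :
    IsClosed (measSupport m) := by
  rw [← isOpen_compl_iff, isOpen_iff_forall_mem_open]
  intro x hx
  simp only [measSupport, Set.mem_compl_iff, Set.mem_setOf_eq, not_forall] at hx
  obtain ⟨U, hU, hxU, hm⟩ := hx
  refine ⟨U, fun y hy => ?_, hU, hxU⟩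
  simp only [measSupport, Set.mem_compl_iff, Set.mem_setOf_eq, not_forall]
  exact ⟨U, hU, hy, hm⟩

lemma cont_integrable [TopologicalSpace X] [CompactSpace X] [MeasurableSpace X] [BorelSpace X]
    {f : X → ℝ} (hf : Continuous f) (m : Measure X) [IsFiniteMeasure m] : Integrable f m :=
  hf.integrable_of_hasCompactSupport (isClosed_tsupport f).isCompact

theorem stmt15 [MetricSpace X] [CompactSpace X] [MeasurableSpace X] [BorelSpace X]
    (A₁ A₂ : Subalgebra ℝ C(X, ℝ))
    (hA₁ : IsClosed (A₁ : Set C(X, ℝ))) (hA₂ : IsClosed (A₂ : Set C(X, ℝ)))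
    (μ : MeasureTheory.SignedMeasure X) (hreg : μ.totalVariation.Regular)
    (hμ : μ ≠ 0)
    (hann : ∀ v₁ ∈ A₁, ∀ v₂ ∈ A₂, ssint μ (fun x => v₁ x + v₂ x) = 0) :
    ∀ x₀ ∈ measSupport μ.toJordanDecomposition.posPart,
      ∃ x₁ ∈ measSupport μ.toJordanDecomposition.negPart,
        ∀ v ∈ A₁, v x₁ = v x₀ := by
  classical
  intro x₀ hx₀
  set mp := μ.toJordanDecomposition.posPart with hmp
  set mn := μ.toJordanDecomposition.negPart with hmn
  haveI : IsFiniteMeasure mp := μ.toJordanDecomposition.posPart_finite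
  haveI : IsFiniteMeasure mn := μ.toJordanDecomposition.negPart_finite
  have key : ∀ v : C(X,ℝ), v ∈ A₁ → ∫ x, v x ∂mp = ∫ x, v x ∂mn := by
    intro v hv
    have h := hann v hv 0 (zero_mem _)
    simp only [ssint, ContinuousMap.zero_apply, add_zero, ← hmp, ← hmn] at h
    linarith
  set K := measSupport mn with hK
  by_cases hKne : K.Nonempty
  · by_contra hcon
    push_neg at hcon
    have hKcl : IsClosed K := isClosed_measSupport mn
    have hKcomp : IsCompact K := hKcl.isCompact
    choose! v hvA hvne using hcon
    set F : X → C(X,ℝ) := fun y => (v y - algebraMap ℝ C(X,ℝ) (v y x₀))^2 with hF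
    have hFapp : ∀ y z, F y z = (v y z - v y x₀)^2 := by
      intro y z
      simp [hF, smul_eq_mul]
    have hFA : ∀ y ∈ K, F y ∈ A₁ := fun y hy =>
      pow_mem (sub_mem (hvA y hy) (Subalgebra.algebraMap_mem A₁ _)) 2
    set W : X → Set X := fun y => {z | 0 < F y z} with hW
    have hWopen : ∀ y, IsOpen (W y) := fun y =>
      isOpen_lt continuous_const (map_continuous (F y))
    have hcover : K ⊆ ⋃ y : K, W y := by
      intro z hz
      refine Set.mem_iUnion.mpr ⟨⟨z, hz⟩, ?_⟩
      have hne : v z z - v z x₀ ≠ 0 := sub_ne_zero.mpr (hvne z hz)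
      simp only [hW, Set.mem_setOf_eq, hFapp]
      exact lt_of_le_of_ne (sq_nonneg _) (Ne.symm (pow_ne_zero 2 hne))
    obtain ⟨s, hs⟩ := hKcomp.elim_finite_subcover (fun y : K => W y) (fun y => hWopen y) hcover
    set f : C(X,ℝ) := ∑ y ∈ s, F y with hf
    have hfA : f ∈ A₁ := Subalgebra.sum_mem _ (fun y _ => hFA y y.2)
    have hfapp : ∀ z, f z = ∑ y ∈ s, F (y : X) z := by
      intro z
      simp [hf]
    have hfnn : ∀ z, 0 ≤ f z := by
      intro z
      rw [hfapp]
      exact Finset.sum_nonneg fun y _ => by rw [hFapp]; positivity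
    have hfx₀ : f x₀ = 0 := by
      rw [hfapp]
      exact Finset.sum_eq_zero fun y _ => by rw [hFapp]; simp
    have hfK : ∀ z ∈ K, 0 < f z := by
      intro z hz
      obtain ⟨y, hys, hzy⟩ := Set.mem_iUnion₂.mp (hs hz)
      rw [hfapp]
      exact Finset.sum_pos' (fun i _ => by rw [hFapp]; positivity) ⟨y, hys, hzy⟩
    obtain ⟨y₀, hy₀K, hy₀min⟩ := hKcomp.exists_isMinOn hKne (map_continuous f).continuousOn
    set c := f y₀ with hc
    have hcpos : 0 < c := hfK y₀ hy₀K
    have hcle : ∀ z ∈ K, c ≤ f z := fun z hz => hy₀min hz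
    have hfleM : ∀ z, f z ≤ ‖f‖ := fun z =>
      (le_abs_self _).trans (f.norm_coe_le_norm z)
    set t : ℝ := (‖f‖ + 1)⁻¹ with ht
    have hMpos : (0:ℝ) < ‖f‖ + 1 := by positivity
    have htpos : 0 < t := by positivity
    have hte : t * (‖f‖ + 1) = 1 := inv_mul_cancel₀ (by positivity)
    set g : C(X,ℝ) := 1 - t • f with hg
    have hgA : g ∈ A₁ := sub_mem (one_mem _) (SMulMemClass.smul_mem t hfA)
    have hgapp : ∀ z, g z = 1 - t * f z := by
      intro z; simp [hg]
    have hg0 : ∀ z, 0 ≤ g z := by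
      intro z
      rw [hgapp]
      nlinarith [hfleM z, hfnn z, mul_le_mul_of_nonneg_left (hfleM z) htpos.le]
    have hgK : ∀ z ∈ K, g z ≤ 1 - t * c := by
      intro z hz
      rw [hgapp]
      nlinarith [hcle z hz]
    have hcM : c ≤ ‖f‖ := hfleM y₀
    have h0tc : 0 ≤ 1 - t * c := by nlinarith
    set V : Set X := {z | f z < c/2} with hV
    have hVopen : IsOpen V := isOpen_lt (map_continuous f) continuous_const
    have hx₀V : x₀ ∈ V := by simp [hV, hfx₀]; positivity
    have hVbound : ∀ z ∈ V, 1 - t * c / 2 ≤ g z := by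
      intro z hz
      rw [hgapp]
      have : f z < c / 2 := hz
      nlinarith
    have hmpV : 0 < mp V := hx₀ V hVopen hx₀V
    set a := (mp V).toReal with ha
    have hapos : 0 < a := ENNReal.toReal_pos hmpV.ne' (measure_ne_top mp V)
    set b := (mn Set.univ).toReal with hb
    have hcomb : ∀ n : ℕ, (1 - t * c / 2)^n * a ≤ (1 - t * c)^n * b := by
      intro n
      have hgcont : Continuous fun z => (g z)^n := (map_continuous g).pow n
      have heq : ∫ z, (g z)^n ∂mp = ∫ z, (g z)^n ∂mn := by
        have := key (g^n) (pow_mem hgA n)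
        simpa using this
      have hupper : ∫ z, (g z)^n ∂mn ≤ (1 - t * c)^n * b := by
        have hae : ∀ᵐ z ∂mn, (g z)^n ≤ (1 - t*c)^n := by
          rw [ae_iff]
          refine measure_mono_null ?_ (null_compl_measSupport mn)
          intro z hz
          simp only [Set.mem_setOf_eq, not_le] at hz
          intro hzK
          exact absurd (pow_le_pow_left₀ (hg0 z) (hgK z hzK) n) (not_le.mpr hz)
        calc ∫ z, (g z)^n ∂mn ≤ ∫ _, (1 - t*c)^n ∂mn :=
              integral_mono_ae (cont_integrable hgcont mn) (integrable_const _) hae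
          _ = (1 - t * c)^n * b := by rw [integral_const, smul_eq_mul, hb, measureReal_def]; ring
      have hlower : (1 - t * c / 2)^n * a ≤ ∫ z, (g z)^n ∂mp := by
        have h1 : (1 - t * c / 2)^n * a = ∫ _ in V, (1 - t * c / 2)^n ∂mp := by
          rw [setIntegral_const, smul_eq_mul, ha, measureReal_def]; ring
        rw [h1]
        calc ∫ _ in V, (1 - t * c / 2)^n ∂mp ≤ ∫ z in V, (g z)^n ∂mp := by
              apply setIntegral_mono_on ((integrableOn_const (measure_lt_top mp V).ne))
                ((cont_integrable hgcont mp).integrableOn) hVopen.measurableSet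
              intro z hz
              have h2 : 0 ≤ 1 - t * c / 2 := by nlinarith
              exact pow_le_pow_left₀ h2 (hVbound z hz) n
          _ ≤ ∫ z, (g z)^n ∂mp :=
              setIntegral_le_integral (cont_integrable hgcont mp)
                (Filter.Eventually.of_forall fun z => pow_nonneg (hg0 z) n)
      linarith [heq ▸ hlower, hupper]
    have hppos : (0:ℝ) < 1 - t * c / 2 := by nlinarith
    set q : ℝ := (1 - t * c) / (1 - t * c / 2) with hq
    have hq0 : 0 ≤ q := div_nonneg h0tc hppos.le
    have hq1 : q < 1 := (div_lt_one hppos).mpr (by nlinarith)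
    have hqa : ∀ n, a ≤ q^n * b := by
      intro n
      have hpn : 0 < (1 - t * c / 2)^n := pow_pos hppos n
      have := hcomb n
      rw [hq, div_pow, div_mul_eq_mul_div, le_div_iff₀ hpn]
      nlinarith
    have htend : Filter.Tendsto (fun n => q^n * b) Filter.atTop (nhds 0) := by
      have := (tendsto_pow_atTop_nhds_zero_of_lt_one hq0 hq1).mul_const b
      simpa using this
    have : a ≤ 0 := ge_of_tendsto' htend hqa
    linarith
  · exfalso
    rw [Set.not_nonempty_iff_eq_empty] at hKne
    have h0 : mn Set.univ = 0 := by
      have := null_compl_measSupport mn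
      rwa [← hK, hKne, Set.compl_empty] at this
    have h1 := key 1 (one_mem _)
    simp only [ContinuousMap.one_apply, integral_const, smul_eq_mul, mul_one] at h1
    have h2 : mp Set.univ = 0 := by
      have : (mp Set.univ).toReal = 0 := by rw [← measureReal_def, h1, measureReal_def, h0]; simp
      exact (ENNReal.toReal_eq_zero_iff _).mp this |>.resolve_right (measure_ne_top mp _)
    have := hx₀ Set.univ isOpen_univ (Set.mem_univ x₀)
    rw [h2] at this
    exact lt_irrefl 0 this
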